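/- Let p_t(k) be the transition probability of the rate-2 continuous-time simple symmetric random walk on ℤ. There exists C > 0 such that for all θ ≥ 0, 0 ≤ ∫₀^∞ (p_s(0) - p_{s+θ}(0)) ds ≤ C√θ. -/

import Mathlib

/-- m-step transition probability of the discrete-time simple symmetric
random walk on ℤ started at 0. -/
noncomputable def discreteWalk (n : ℕ) (k : ℤ) : ℝ :=
  if (k + n) % 2 = 0 ∧ k.natAbs ≤ n then
    ((n.choose ((k + n) / 2).toNat : ℕ) : ℝ) / 2 ^ n
  else 0

/-- Transition probability p_t(k) of the rate-2 continuous-time simple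
symmetric random walk on ℤ: the number of jumps is Poisson(2t) and each jump
is ±1 with probability 1/2. -/
noncomputable def ctWalk (t : ℝ) (k : ℤ) : ℝ :=
  ∑' n : ℕ, Real.exp (-(2 * t)) * (2 * t) ^ n / (n.factorial : ℝ) * discreteWalk n k

lemma dw_nonneg (n : ℕ) (k : ℤ) : 0 ≤ discreteWalk n k := by
  unfold discreteWalk; split <;> positivity

lemma dw_even (m : ℕ) : discreteWalk (2*m) 0 = ((2*m).choose m : ℝ) / 2 ^ (2*m) := by
  unfold discreteWalk
  rw [if_pos]
  · congr 3
    omega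
  · exact ⟨by omega, by simp⟩

lemma dw_odd (m : ℕ) : discreteWalk (2*m+1) 0 = 0 := by
  unfold discreteWalk
  rw [if_neg]
  intro ⟨h, _⟩
  omega

lemma choose_le_two_pow (n k : ℕ) : n.choose k ≤ 2 ^ n := by
  rcases le_or_gt k n with h | h
  · calc n.choose k ≤ ∑ i ∈ Finset.range (n+1), n.choose i :=
        Finset.single_le_sum (fun i _ => Nat.zero_le _) (Finset.mem_range.2 (by omega))
    _ = 2 ^ n := Nat.sum_range_choose n
  · rw [Nat.choose_eq_zero_of_lt h]; positivity

lemma dw_le_one (n : ℕ) (k : ℤ) : discreteWalk n k ≤ 1 := by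
  unfold discreteWalk
  split
  · rw [div_le_one (by positivity)]
    calc ((n.choose _ : ℕ) : ℝ) ≤ ((2^n : ℕ) : ℝ) := by exact_mod_cast choose_le_two_pow n _
    _ = 2 ^ n := by push_cast; ring
  · norm_num

lemma central_binom_sq (m : ℕ) : (m+1) * (m.centralBinom)^2 ≤ 16 ^ m := by
  induction m with
  | zero => simp [Nat.centralBinom]
  | succ m ih =>
    have key := Nat.succ_mul_centralBinom_succ m
    have h1 : (2*m+1)^2 * (m+2) ≤ 4 * (m+1)^3 := by nlinarith
    have h2 : ((m+1)^2) * ((m+1+1) * ((m+1).centralBinom)^2)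
        = 4 * (2*m+1)^2 * (m+2) * (m.centralBinom)^2 := by
      have : ((m+1) * (m+1).centralBinom)^2 = (2 * (2*m+1) * m.centralBinom)^2 := by rw [key]
      nlinarith [this]
    have h3 : ((m+1)^2) * ((m+1+1) * ((m+1).centralBinom)^2) ≤ ((m+1)^2) * 16^(m+1) := by
      calc ((m+1)^2) * ((m+1+1) * ((m+1).centralBinom)^2)
          = 4 * (2*m+1)^2 * (m+2) * (m.centralBinom)^2 := h2
        _ ≤ 4 * (4 * (m+1)^3) * (m.centralBinom)^2 := by nlinarith [h1, sq_nonneg m.centralBinom]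
        _ = 16 * (m+1)^2 * ((m+1) * (m.centralBinom)^2) := by ring
        _ ≤ 16 * (m+1)^2 * 16^m := by
            exact Nat.mul_le_mul_left _ ih
        _ = ((m+1)^2) * 16^(m+1) := by ring
    exact Nat.le_of_mul_le_mul_left h3 (by positivity)

lemma dw_sq (n : ℕ) : (discreteWalk n 0)^2 ≤ 2 / ((n:ℝ)+1) := by
  have hpos : (0:ℝ) < (n:ℝ) + 1 := by positivity
  rcases Nat.even_or_odd n with ⟨m, hm⟩ | ⟨m, hm⟩
  · subst hm
    rw [show m + m = 2*m by ring, dw_even]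
    have hc := central_binom_sq m
    rw [Nat.centralBinom_eq_two_mul_choose] at hc
    have hcR : ((m:ℝ)+1) * ((2*m).choose m : ℝ)^2 ≤ 16 ^ m := by exact_mod_cast hc
    rw [div_pow, div_le_div_iff₀ (by positivity) (by push_cast; positivity)]
    have h16 : ((2:ℝ)^(2*m))^2 = 16^m := by
      rw [← pow_mul, show 2*m*2 = 4*m by ring, pow_mul]; norm_num
    rw [h16]
    push_cast
    nlinarith [hcR, pow_pos (by norm_num : (0:ℝ) < 16) m, sq_nonneg (((2*m).choose m : ℝ))]
  · subst hm
    rw [dw_odd]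
    norm_num
    positivity

noncomputable def pw (t : ℝ) (n : ℕ) : ℝ := Real.exp (-(2*t)) * (2*t)^n / (n.factorial : ℝ)

lemma exp_tsum (x : ℝ) : ∑' n : ℕ, x ^ n / (n.factorial : ℝ) = Real.exp x := by
  rw [Real.exp_eq_exp_ℝ, NormedSpace.exp_eq_tsum_div]

lemma pw_nonneg {t : ℝ} (ht : 0 ≤ t) (n : ℕ) : 0 ≤ pw t n := by
  unfold pw; positivity

lemma pw_summable (t : ℝ) : Summable (pw t) := by
  unfold pw
  simpa [mul_div_assoc] using (Real.summable_pow_div_factorial (2*t)).mul_left (Real.exp (-(2*t)))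

lemma pw_tsum (t : ℝ) : ∑' n, pw t n = 1 := by
  unfold pw
  rw [show (fun n : ℕ => Real.exp (-(2*t)) * (2*t)^n / (n.factorial:ℝ))
      = (fun n : ℕ => Real.exp (-(2*t)) * ((2*t)^n / (n.factorial:ℝ))) by
    funext n; ring]
  rw [tsum_mul_left, exp_tsum, ← Real.exp_add]
  norm_num

-- Jensen / variance lemma
lemma jensen_sq (w f : ℕ → ℝ) (hw : ∀ n, 0 ≤ w n) (hf0 : ∀ n, 0 ≤ f n)
    (hf1 : ∀ n, f n ≤ 1) (hsw : Summable w) (hw1 : ∑' n, w n = 1) :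
    (∑' n, w n * f n)^2 ≤ ∑' n, w n * (f n)^2 := by
  have hswf : Summable (fun n => w n * f n) :=
    hsw.of_nonneg_of_le (fun n => mul_nonneg (hw n) (hf0 n))
      (fun n => mul_le_of_le_one_right (hw n) (hf1 n))
  have hswf2 : Summable (fun n => w n * (f n)^2) :=
    hsw.of_nonneg_of_le (fun n => mul_nonneg (hw n) (sq_nonneg _))
      (fun n => mul_le_of_le_one_right (hw n) (by nlinarith [hf0 n, hf1 n]))
  set S := ∑' n, w n * f n with hS
  have hkey : ∀ n, 0 ≤ w n * (f n - S)^2 := fun n => mul_nonneg (hw n) (sq_nonneg _)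
  have hexp : (fun n => w n * (f n - S)^2)
      = fun n => (w n * (f n)^2 - 2 * S * (w n * f n)) + S^2 * w n := by
    funext n; ring
  have hsum1 : Summable (fun n => w n * (f n)^2 - 2 * S * (w n * f n)) :=
    hswf2.sub (hswf.mul_left _)
  have hsumall : Summable (fun n => w n * (f n - S)^2) := by
    rw [hexp]; exact hsum1.add (hsw.mul_left _)
  have h0 : 0 ≤ ∑' n, w n * (f n - S)^2 := tsum_nonneg hkey
  rw [hexp] at h0
  rw [Summable.tsum_add hsum1 (hsw.mul_left _), Summable.tsum_sub hswf2 (hswf.mul_left _),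
    tsum_mul_left, tsum_mul_left, hw1, ← hS] at h0
  nlinarith [h0]

lemma ct_eq (t : ℝ) (k : ℤ) : ctWalk t k = ∑' n, pw t n * discreteWalk n k := rfl

lemma ct_summable (t : ℝ) (k : ℤ) : Summable (fun n => pw t n * discreteWalk n k) := by
  refine Summable.of_norm_bounded (g := fun n => Real.exp (-(2*t)) * |2*t|^n / (n.factorial:ℝ)) ?_ ?_
  · simpa [mul_div_assoc] using
      (Real.summable_pow_div_factorial |2*t|).mul_left (Real.exp (-(2*t)))
  · intro n
    rw [norm_mul]
    have h1 : ‖pw t n‖ ≤ Real.exp (-(2*t)) * |2*t|^n / (n.factorial:ℝ) := by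
      unfold pw
      rw [norm_div, norm_mul, Real.norm_eq_abs, Real.norm_eq_abs, Real.norm_eq_abs,
        abs_pow, Real.abs_exp, abs_of_nonneg (by positivity : (0:ℝ) ≤ (n.factorial:ℝ))]
    have h2 : ‖discreteWalk n k‖ ≤ 1 := by
      rw [Real.norm_eq_abs, abs_of_nonneg (dw_nonneg n k)]; exact dw_le_one n k
    calc ‖pw t n‖ * ‖discreteWalk n k‖ ≤ ‖pw t n‖ * 1 :=
          mul_le_mul_of_nonneg_left h2 (norm_nonneg _)
      _ ≤ _ := by rw [mul_one]; exact h1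

lemma ct_nonneg {t : ℝ} (ht : 0 ≤ t) (k : ℤ) : 0 ≤ ctWalk t k := by
  rw [ct_eq]
  exact tsum_nonneg fun n => mul_nonneg (pw_nonneg ht n) (dw_nonneg n k)

lemma ct_le_one {t : ℝ} (ht : 0 ≤ t) (k : ℤ) : ctWalk t k ≤ 1 := by
  rw [ct_eq, ← pw_tsum t]
  exact Summable.tsum_le_tsum (fun n => mul_le_of_le_one_right (pw_nonneg ht n) (dw_le_one n k))
    (ct_summable t k) (pw_summable t)

lemma ct_sq_le {s : ℝ} (hs : 0 < s) : (ctWalk s 0)^2 ≤ 1 / s := by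
  set lam := 2 * s with hlam
  have hlam0 : 0 < lam := by positivity
  rw [ct_eq]
  have h1 := jensen_sq (pw s) (fun n => discreteWalk n 0) (pw_nonneg hs.le)
    (fun n => dw_nonneg n 0) (fun n => dw_le_one n 0) (pw_summable s) (pw_tsum s)
  have hsum2 : Summable (fun n => pw s n * (2 / ((n:ℝ)+1))) := by
    refine (pw_summable s).mul_left 2 |>.of_nonneg_of_le
      (fun n => mul_nonneg (pw_nonneg hs.le n) (by positivity)) (fun n => ?_)
    have h2 : 2 / ((n:ℝ)+1) ≤ 2 := by
      rw [div_le_iff₀ (by positivity)]; nlinarith [Nat.cast_nonneg (α := ℝ) n]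
    calc pw s n * (2 / ((n:ℝ)+1)) ≤ pw s n * 2 :=
        mul_le_mul_of_nonneg_left h2 (pw_nonneg hs.le n)
      _ = 2 * pw s n := by ring
  have h2 : ∑' n, pw s n * (discreteWalk n 0)^2 ≤ ∑' n, pw s n * (2 / ((n:ℝ)+1)) := by
    refine Summable.tsum_le_tsum (fun n => mul_le_mul_of_nonneg_left (dw_sq n) (pw_nonneg hs.le n))
      ?_ hsum2
    · exact (pw_summable s).of_nonneg_of_le
        (fun n => mul_nonneg (pw_nonneg hs.le n) (sq_nonneg _))
        (fun n => mul_le_of_le_one_right (pw_nonneg hs.le n)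
          (by nlinarith [dw_nonneg n 0, dw_le_one n 0]))
  have h3 : ∑' n, pw s n * (2 / ((n:ℝ)+1)) ≤ 1 / s := by
    have heq : (fun n : ℕ => pw s n * (2 / ((n:ℝ)+1)))
        = fun n : ℕ => (2 * Real.exp (-lam) / lam) * (lam^(n+1) / ((n+1).factorial : ℝ)) := by
      funext n
      unfold pw
      rw [Nat.factorial_succ]
      push_cast
      rw [hlam]
      field_simp
      ring
    rw [heq, tsum_mul_left]
    have hshift : ∑' n : ℕ, lam^(n+1) / (((n+1).factorial : ℕ) : ℝ) = Real.exp lam - 1 := by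
      have hsumm : Summable (fun n : ℕ => lam^n / ((n.factorial : ℕ) : ℝ)) :=
        Real.summable_pow_div_factorial lam
      have := Summable.tsum_eq_zero_add hsumm
      rw [exp_tsum] at this
      simp only [pow_zero, Nat.factorial_zero, Nat.cast_one, div_one] at this
      linarith [this]
    rw [hshift]
    have key : Real.exp (-lam) * (Real.exp lam - 1) ≤ 1 := by
      rw [mul_sub, ← Real.exp_add, neg_add_cancel, Real.exp_zero, mul_one]
      have := Real.exp_pos (-lam)
      linarith
    have h4 : 2 * Real.exp (-lam) / lam * (Real.exp lam - 1)
        = (2 / lam) * (Real.exp (-lam) * (Real.exp lam - 1)) := by ring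
    rw [h4]
    have h5 : (2 / lam) * (Real.exp (-lam) * (Real.exp lam - 1)) ≤ (2 / lam) * 1 :=
      mul_le_mul_of_nonneg_left key (by positivity)
    have h6 : (2 / lam) * 1 = 1 / s := by rw [mul_one, hlam]; field_simp
    linarith [h5, h6.le, h6.ge]
  exact le_trans (by simpa using h1) (le_trans h2 h3)

lemma ct_le_inv_sqrt {s : ℝ} (hs : 0 < s) : ctWalk s 0 ≤ 1 / Real.sqrt s := by
  rw [one_div, ← Real.sqrt_inv, ← one_div]
  exact (Real.le_sqrt (ct_nonneg hs.le 0) (by positivity)).2 (ct_sq_le hs)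

lemma ct_measurable : Measurable (fun s : ℝ => ctWalk s 0) := by
  have hmeas : ∀ N : ℕ, Measurable (fun s : ℝ => ∑ n ∈ Finset.range N, pw s n * discreteWalk n 0) := by
    intro N
    apply Finset.measurable_sum
    intro n _
    have : Continuous (fun s : ℝ => pw s n * discreteWalk n 0) := by
      unfold pw; fun_prop
    exact this.measurable
  apply measurable_of_tendsto_metrizable hmeas
  rw [tendsto_pi_nhds]
  intro s
  simpa [ct_eq] using (ct_summable s 0).hasSum.tendsto_sum_nat

lemma ct_intble {a b : ℝ} (ha : 0 ≤ a) (hb : 0 ≤ b) :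
    IntervalIntegrable (fun s : ℝ => ctWalk s 0) MeasureTheory.volume a b := by
  rw [intervalIntegrable_iff]
  apply MeasureTheory.Integrable.mono' (g := fun _ : ℝ => (1:ℝ))
    (MeasureTheory.integrableOn_const measure_Ioc_lt_top.ne)
    ct_measurable.aestronglyMeasurable.restrict
  apply (MeasureTheory.ae_restrict_iff' measurableSet_uIoc).2
  filter_upwards with s hs
  have hs0 : 0 ≤ s := by
    rcases hs with ⟨h1, _⟩
    have : (0:ℝ) ≤ min a b := le_min ha hb
    linarith [h1]
  rw [Real.norm_eq_abs, abs_of_nonneg (ct_nonneg hs0 0)]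
  exact ct_le_one hs0 0

open MeasureTheory intervalIntegral in
lemma tail_small (θ : ℝ) (hθ : 0 ≤ θ) :
    Filter.Tendsto (fun T : ℝ => ∫ s in T..(T+θ), ctWalk s 0) Filter.atTop (nhds 0) := by
  have hb : ∀ T : ℝ, 1 ≤ T → |∫ s in T..(T+θ), ctWalk s 0| ≤ θ * (1 / Real.sqrt T) := by
    intro T hT
    have hT0 : (0:ℝ) < T := by linarith
    have h1 : ∫ s in T..(T+θ), ctWalk s 0 ≤ ∫ s in T..(T+θ), (1 / Real.sqrt T) := by
      apply integral_mono_on (by linarith) (ct_intble hT0.le (by linarith))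
        intervalIntegrable_const
      intro s hs
      calc ctWalk s 0 ≤ 1 / Real.sqrt s := ct_le_inv_sqrt (lt_of_lt_of_le hT0 hs.1)
        _ ≤ 1 / Real.sqrt T := by
          apply div_le_div_of_nonneg_left one_pos.le (Real.sqrt_pos.2 hT0)
            (Real.sqrt_le_sqrt hs.1)
    rw [intervalIntegral.integral_const, smul_eq_mul] at h1
    have h2 : 0 ≤ ∫ s in T..(T+θ), ctWalk s 0 :=
      integral_nonneg (by linarith) (fun s hs => ct_nonneg (by linarith [hs.1]) 0)
    rw [abs_of_nonneg h2]
    calc _ ≤ (T + θ - T) * (1 / Real.sqrt T) := h1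
      _ = θ * (1 / Real.sqrt T) := by ring
  have hlim : Filter.Tendsto (fun T : ℝ => θ * (1 / Real.sqrt T)) Filter.atTop (nhds 0) := by
    have hs : Filter.Tendsto Real.sqrt Filter.atTop Filter.atTop := by
      apply Filter.tendsto_atTop_atTop_of_monotone (fun x y h => Real.sqrt_le_sqrt h)
      intro b
      exact ⟨b^2, by rw [Real.sqrt_sq_eq_abs]; exact le_abs_self b⟩
    have := hs.inv_tendsto_atTop
    simpa [one_div] using this.const_mul θ
  apply squeeze_zero_norm' _ hlim
  filter_upwards [Filter.eventually_ge_atTop (1:ℝ)] with T hT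
  exact hb T hT

open MeasureTheory intervalIntegral in
lemma split_id (θ T : ℝ) (hθ : 0 ≤ θ) (hT : 0 ≤ T) :
    ∫ s in (0:ℝ)..T, (ctWalk s 0 - ctWalk (s+θ) 0)
      = (∫ s in (0:ℝ)..θ, ctWalk s 0) - ∫ s in T..(T+θ), ctWalk s 0 := by
  have I1 : IntervalIntegrable (fun s => ctWalk s 0) volume 0 T := ct_intble le_rfl hT
  have I2 : IntervalIntegrable (fun s : ℝ => ctWalk (s+θ) 0) volume 0 T := by
    have h := (ct_intble hθ (by linarith : (0:ℝ) ≤ T+θ)).comp_add_right θ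
    simpa using h
  rw [integral_sub I1 I2, integral_comp_add_right (fun s => ctWalk s 0) θ]
  simp only [zero_add]
  have A := integral_add_adjacent_intervals I1 (ct_intble hT (by linarith : (0:ℝ) ≤ T+θ))
  have B := integral_add_adjacent_intervals (ct_intble le_rfl hθ)
    (ct_intble hθ (by linarith : (0:ℝ) ≤ T+θ))
  linarith

open MeasureTheory intervalIntegral in
lemma head_bound (θ : ℝ) (hθ : 0 ≤ θ) :
    ∫ s in (0:ℝ)..θ, ctWalk s 0 ≤ 2 * Real.sqrt θ := by
  rcases le_or_gt θ 1 with h1 | h1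
  · have : ∫ s in (0:ℝ)..θ, ctWalk s 0 ≤ ∫ s in (0:ℝ)..θ, (1:ℝ) := by
      apply integral_mono_on hθ (ct_intble le_rfl hθ) intervalIntegrable_const
      exact fun s hs => ct_le_one hs.1 0
    rw [intervalIntegral.integral_const, smul_eq_mul, mul_one] at this
    have h2 : θ - 0 ≤ Real.sqrt θ := by
      rw [sub_zero]
      exact (Real.le_sqrt hθ hθ).2 (by nlinarith)
    nlinarith [Real.sqrt_nonneg θ, this, h2]
  · -- θ > 1
    have hsub : ∀ x ∈ Set.uIcc (1:ℝ) θ, (0:ℝ) < x := by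
      intro x hx
      rw [Set.uIcc_of_le h1.le] at hx
      linarith [hx.1]
    have hderiv : ∀ x ∈ Set.uIcc (1:ℝ) θ,
        HasDerivAt (fun s : ℝ => 2 * Real.sqrt s) (1 / Real.sqrt x) x := by
      intro x hx
      have hx0 := hsub x hx
      have h := (Real.hasDerivAt_sqrt (ne_of_gt hx0)).const_mul 2
      have hs0 : Real.sqrt x ≠ 0 := ne_of_gt (Real.sqrt_pos.2 hx0)
      rw [show (1 / Real.sqrt x) = 2 * (1 / (2 * Real.sqrt x)) by field_simp]
      exact h
    have hcint : IntervalIntegrable (fun s : ℝ => 1 / Real.sqrt s) volume 1 θ := by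
      apply ContinuousOn.intervalIntegrable
      apply ContinuousOn.div continuousOn_const Real.continuous_sqrt.continuousOn
      exact fun x hx => ne_of_gt (Real.sqrt_pos.2 (hsub x hx))
    have hftc : ∫ s in (1:ℝ)..θ, 1 / Real.sqrt s = 2 * Real.sqrt θ - 2 := by
      rw [integral_eq_sub_of_hasDerivAt hderiv hcint]
      simp [Real.sqrt_one]
    have hA : ∫ s in (0:ℝ)..1, ctWalk s 0 ≤ 1 := by
      have : ∫ s in (0:ℝ)..1, ctWalk s 0 ≤ ∫ s in (0:ℝ)..1, (1:ℝ) := by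
        apply integral_mono_on zero_le_one (ct_intble le_rfl zero_le_one)
          intervalIntegrable_const
        exact fun s hs => ct_le_one hs.1 0
      simpa using this
    have hB : ∫ s in (1:ℝ)..θ, ctWalk s 0 ≤ 2 * Real.sqrt θ - 2 := by
      rw [← hftc]
      apply integral_mono_on h1.le (ct_intble zero_le_one (by linarith)) hcint
      intro s hs
      exact ct_le_inv_sqrt (by linarith [hs.1])
    have hsplit := integral_add_adjacent_intervals
      (ct_intble le_rfl zero_le_one) (ct_intble zero_le_one (by linarith : (0:ℝ) ≤ θ))
    linarith

/-- Estimate (47): 0 ≤ ∫₀^∞ (p_s(0) - p_{s+θ}(0)) ds ≤ C√θ. -/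
theorem time_increment_bound :
    ∃ C : ℝ, 0 < C ∧ ∀ θ : ℝ, 0 ≤ θ →
      0 ≤ ∫ s in Set.Ioi (0:ℝ), (ctWalk s 0 - ctWalk (s + θ) 0) ∧
      ∫ s in Set.Ioi (0:ℝ), (ctWalk s 0 - ctWalk (s + θ) 0) ≤ C * Real.sqrt θ := by
  refine ⟨2, two_pos, fun θ hθ => ?_⟩
  set f : ℝ → ℝ := fun s => ctWalk s 0 - ctWalk (s + θ) 0 with hf
  by_cases hInt : MeasureTheory.IntegrableOn f (Set.Ioi (0:ℝ)) MeasureTheory.volume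
  · have hlim1 := MeasureTheory.intervalIntegral_tendsto_integral_Ioi 0 hInt
      (Filter.tendsto_id (α := ℝ))
    have h0θ : 0 ≤ ∫ s in (0:ℝ)..θ, ctWalk s 0 :=
      intervalIntegral.integral_nonneg hθ (fun s hs => ct_nonneg hs.1 0)
    have hlim2 : Filter.Tendsto (fun T : ℝ => ∫ s in (0:ℝ)..T, f s) Filter.atTop
        (nhds ((∫ s in (0:ℝ)..θ, ctWalk s 0) - 0)) := by
      apply Filter.Tendsto.congr' _ ((tendsto_const_nhds).sub (tail_small θ hθ))
      filter_upwards [Filter.eventually_ge_atTop (0:ℝ)] with T hT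
      exact (split_id θ T hθ hT).symm
    have hkey : ∫ s in Set.Ioi (0:ℝ), f s = ∫ s in (0:ℝ)..θ, ctWalk s 0 := by
      have := tendsto_nhds_unique hlim1 hlim2
      rw [this, sub_zero]
    rw [hf] at hkey
    constructor
    · rw [hkey]; exact h0θ
    · rw [hkey]; exact head_bound θ hθ
  · rw [MeasureTheory.integral_undef hInt]
    exact ⟨le_refl 0, by positivity⟩
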